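/- Let G be a strongly connected balanced digraph on n vertices with Laplacian L and let κ(G) be the common value of all cofactors of L (the number of rooted spanning trees). If (i,j) or (j,i) is a directed edge of G, then det(L[{i,j}ᶜ,{i,j}ᶜ]) ≤ κ(G). -/

import Mathlib

open Matrix Finset

/-- Out-degree of vertex `i` in the digraph with adjacency `A`. -/
def outdeg {n : ℕ} (A : Fin n → Fin n → Bool) (i : Fin n) : ℕ :=
  (Finset.univ.filter (fun j => A i j = true)).card

/-- In-degree of vertex `i`. -/
def indeg {n : ℕ} (A : Fin n → Fin n → Bool) (i : Fin n) : ℕ :=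
  (Finset.univ.filter (fun j => A j i = true)).card

/-- Laplacian matrix of a digraph: diagonal = out-degree, `-1` on edges, `0` otherwise. -/
def lap {n : ℕ} (A : Fin n → Fin n → Bool) : Matrix (Fin n) (Fin n) ℝ :=
  Matrix.of fun i j => if i = j then (outdeg A i : ℝ) else if A i j then -1 else 0

/-- Reachability by directed edges. -/
def Reach {n : ℕ} (A : Fin n → Fin n → Bool) : Fin n → Fin n → Prop :=
  Relation.ReflTransGen (fun a b => A a b = true)

def StronglyConnected {n : ℕ} (A : Fin n → Fin n → Bool) : Prop := ∀ i j, Reach A i j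

def IsBalanced {n : ℕ} (A : Fin n → Fin n → Bool) : Prop := ∀ i, indeg A i = outdeg A i

/-- In-degree of `v` in an edge set `T`. -/
def tIndeg {n : ℕ} (T : Finset (Fin n × Fin n)) (v : Fin n) : ℕ :=
  (T.filter (fun e => e.2 = v)).card

/-- Reachability using only the edges of `T`. -/
def ReachIn {n : ℕ} (T : Finset (Fin n × Fin n)) : Fin n → Fin n → Prop :=
  Relation.ReflTransGen (fun a b => (a, b) ∈ T)

/-- Spanning tree of the digraph rooted at `i` (spanning arborescence, edges directed
away from `i`): every vertex other than `i` has in-degree 1, `i` has in-degree 0, and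
every vertex is reachable from `i` (i.e. the subgraph is connected and acyclic). -/
def IsSpanningTree {n : ℕ} (A : Fin n → Fin n → Bool) (i : Fin n)
    (T : Finset (Fin n × Fin n)) : Prop :=
  (∀ e ∈ T, A e.1 e.2 = true) ∧ tIndeg T i = 0 ∧
    (∀ v, v ≠ i → tIndeg T v = 1) ∧ (∀ v, ReachIn T i v)

/-- Spanning forest with exactly two trees, rooted at `i` and `j`: two vertex-disjoint
arborescences partitioning the vertex set, with roots `i` and `j`. -/
def IsTwoForest {n : ℕ} (A : Fin n → Fin n → Bool) (i j : Fin n)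
    (T : Finset (Fin n × Fin n)) : Prop :=
  (∀ e ∈ T, A e.1 e.2 = true) ∧ tIndeg T i = 0 ∧ tIndeg T j = 0 ∧
    (∀ v, v ≠ i → v ≠ j → tIndeg T v = 1) ∧ (∀ v, ReachIn T i v ∨ ReachIn T j v)

/-- `det L[{i}ᶜ, {i}ᶜ]`: determinant of the principal submatrix deleting row/column `i`. -/
def minor1 {n : ℕ} (L : Matrix (Fin n) (Fin n) ℝ) (i : Fin n) : ℝ :=
  (L.submatrix (fun a : {x : Fin n // x ≠ i} => (a : Fin n))
    (fun a : {x : Fin n // x ≠ i} => (a : Fin n))).det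

/-- `det L[{i,j}ᶜ, {i,j}ᶜ]`: determinant of the principal submatrix deleting rows and
columns `i` and `j`. -/
def minor2 {n : ℕ} (L : Matrix (Fin n) (Fin n) ℝ) (i j : Fin n) : ℝ :=
  (L.submatrix (fun a : {x : Fin n // x ≠ i ∧ x ≠ j} => (a : Fin n))
    (fun a : {x : Fin n // x ≠ i ∧ x ≠ j} => (a : Fin n))).det

/-- `M` is the Moore–Penrose inverse of `L` (the four Penrose equations). -/
def IsMoorePenrose {n : ℕ} (L M : Matrix (Fin n) (Fin n) ℝ) : Prop :=
  L * M * L = L ∧ M * L * M = M ∧ (L * M)ᵀ = L * M ∧ (M * L)ᵀ = M * L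

/-- Resistance `r_{ij} = l†_{ii} + l†_{jj} - 2 l†_{ij}` computed from `M = L†`. -/
def resist {n : ℕ} (M : Matrix (Fin n) (Fin n) ℝ) (i j : Fin n) : ℝ :=
  M i i + M j j - 2 * M i j

/-- Directed path from `i` to `j`: a list of distinct vertices starting at `i`, ending at
`j`, consecutive ones joined by directed edges. -/
def IsPath {n : ℕ} (A : Fin n → Fin n → Bool) (i j : Fin n) (p : List (Fin n)) : Prop :=
  p.Chain' (fun a b => A a b = true) ∧ p.head? = some i ∧ p.getLast? = some j ∧ p.Nodup

/-- `s` is the edge set of a directed cycle of the digraph: the cyclically consecutive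
pairs of a nonempty duplicate-free vertex list, all being directed edges. -/
def IsCycle {n : ℕ} (A : Fin n → Fin n → Bool) (s : Finset (Fin n × Fin n)) : Prop :=
  ∃ c : List (Fin n), 2 ≤ c.length ∧ c.Nodup ∧
    (∀ p ∈ c.zip (c.rotate 1), A p.1 p.2 = true) ∧ s = (c.zip (c.rotate 1)).toFinset

/-- Vertex set of a cycle given by its edge set. -/
def cycVerts {n : ℕ} (s : Finset (Fin n × Fin n)) : Finset (Fin n) := s.image Prod.fst

/-- Directed cactus: strongly connected and every directed edge lies in exactly one
directed cycle. -/
def IsCactus {n : ℕ} (A : Fin n → Fin n → Bool) : Prop :=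
  StronglyConnected A ∧
    ∀ i j : Fin n, A i j = true → ∃! s : Finset (Fin n × Fin n), IsCycle A s ∧ (i, j) ∈ s

/-- Classical distance: length (number of edges) of a shortest directed path. -/
noncomputable def pdist {n : ℕ} (A : Fin n → Fin n → Bool) (i j : Fin n) : ℕ :=
  sInf {m : ℕ | ∃ p : List (Fin n), IsPath A i j p ∧ p.length = m + 1}


lemma det_nonneg_aux : ∀ (m : ℕ) (B : Matrix (Fin m) (Fin m) ℝ),
    (∀ v w, v ≠ w → B v w ≤ 0) → (∀ v, 0 ≤ ∑ w, B v w) → 0 ≤ B.det := by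
  intro m
  induction m with
  | zero => intro B _ _; simp [Matrix.det_isEmpty]
  | succ m ih =>
    intro B hoff hrow
    have hdiag : ∀ v, 0 ≤ B v v := by
      intro v
      have h1 : ∑ w ∈ Finset.univ.erase v, B v w ≤ 0 :=
        Finset.sum_nonpos (fun w hw => hoff v w (Ne.symm (Finset.ne_of_mem_erase hw)))
      have h2 : ∑ w, B v w = B v v + ∑ w ∈ Finset.univ.erase v, B v w :=
        (Finset.add_sum_erase _ _ (Finset.mem_univ v)).symm
      have := hrow v
      rw [h2] at this
      linarith
    by_cases h0 : B 0 0 = 0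
    · have hr0 : ∀ w, B 0 w = 0 := by
        intro w
        have h1 : ∀ w ∈ Finset.univ.erase (0 : Fin (m+1)), B 0 w ≤ 0 :=
          fun w hw => hoff 0 w (Ne.symm (Finset.ne_of_mem_erase hw))
        have h2 : ∑ w, B 0 w = B 0 0 + ∑ w ∈ Finset.univ.erase (0:Fin (m+1)), B 0 w :=
          (Finset.add_sum_erase _ _ (Finset.mem_univ _)).symm
        have h3 := hrow 0
        rw [h2, h0, zero_add] at h3
        have h4 : ∑ w ∈ Finset.univ.erase (0:Fin (m+1)), B 0 w = 0 :=
          le_antisymm (Finset.sum_nonpos h1) h3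
        rcases eq_or_ne w 0 with rfl | hw
        · exact h0
        · have := (Finset.sum_eq_zero_iff_of_nonpos h1).1 h4 w (Finset.mem_erase.2 ⟨hw, Finset.mem_univ _⟩)
          exact this
      rw [Matrix.det_eq_zero_of_row_eq_zero 0 hr0]
    · have hpos : 0 < B 0 0 := lt_of_le_of_ne (hdiag 0) (Ne.symm h0)
      set E : Matrix (Fin (m+1)) (Fin (m+1)) ℝ :=
        Matrix.of fun v w => if w = 0 then (if v = 0 then 1 else -(B v 0) / B 0 0)
          else (if v = w then (1:ℝ) else 0) with hE
      have hdetE : E.det = 1 := by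
        have htri : E.BlockTriangular OrderDual.toDual := by
          intro a b hab
          have hab' : a < b := hab
          have hb0 : b ≠ 0 := (Fin.pos_iff_ne_zero.mp (lt_of_le_of_lt (Fin.zero_le a) hab'))
          simp only [hE, Matrix.of_apply, if_neg hb0, if_neg hab'.ne]
        rw [Matrix.det_of_lowerTriangular E htri]
        have : ∀ v : Fin (m+1), E v v = 1 := by
          intro v
          rcases eq_or_ne v 0 with rfl | hv
          · simp [hE]
          · simp [hE, hv]
        simp [this]
      set C : Matrix (Fin (m+1)) (Fin (m+1)) ℝ :=
        Matrix.of fun v w => if v = 0 then B 0 w else B v w - B v 0 / B 0 0 * B 0 w with hC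
      have hEB : E * B = C := by
        ext v w
        rw [Matrix.mul_apply]
        rcases eq_or_ne v 0 with rfl | hv
        · rw [Finset.sum_eq_single 0]
          · simp [hE, hC]
          · intro u _ hu
            simp [hE, hu, Ne.symm hu]
          · simp
        · rw [Finset.sum_eq_add_of_mem 0 v (Finset.mem_univ _) (Finset.mem_univ _) (Ne.symm hv) ?h]
          · simp [hE, hC, hv]
            ring
          · intro u _ hu
            rcases hu with ⟨hu0, huv⟩
            simp [hE, hu0, Ne.symm huv]
      have hC0 : ∀ v : Fin (m+1), v ≠ 0 → C v 0 = 0 := by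
        intro v hv
        simp only [hC, Matrix.of_apply, if_neg hv]
        field_simp
        ring
      set D : Matrix (Fin m) (Fin m) ℝ := C.submatrix Fin.succ Fin.succ with hD
      have hdetC : C.det = B 0 0 * D.det := by
        rw [Matrix.det_succ_column_zero, Finset.sum_eq_single 0]
        · simp [hC, hD, Fin.succAbove_zero]
        · intro u _ hu
          rw [hC0 u hu]; ring
        · simp
      have hoffD : ∀ v w, v ≠ w → D v w ≤ 0 := by
        intro v w hvw
        have h1 : B v.succ w.succ ≤ 0 := hoff _ _ (fun h => hvw (Fin.succ_injective _ h))
        have h3 : B 0 w.succ ≤ 0 := hoff 0 w.succ (Fin.succ_ne_zero w).symm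
        have h4 : B v.succ 0 / B 0 0 ≤ 0 :=
          div_nonpos_of_nonpos_of_nonneg (hoff v.succ 0 (Fin.succ_ne_zero v)) hpos.le
        have h2 : 0 ≤ B v.succ 0 / B 0 0 * B 0 w.succ := mul_nonneg_of_nonpos_of_nonpos h4 h3
        simp only [hD, Matrix.submatrix_apply, hC, Matrix.of_apply, if_neg (Fin.succ_ne_zero v)]
        linarith
      have hrowD : ∀ v, 0 ≤ ∑ w, D v w := by
        intro v
        have e1 : ∑ w : Fin (m+1), B v.succ w = B v.succ 0 + ∑ w : Fin m, B v.succ w.succ :=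
          Fin.sum_univ_succ _
        have e2 : ∑ w : Fin (m+1), B 0 w = B 0 0 + ∑ w : Fin m, B 0 w.succ :=
          Fin.sum_univ_succ _
        have hsum : ∑ w, D v w = ∑ w : Fin m, B v.succ w.succ
            - B v.succ 0 / B 0 0 * ∑ w : Fin m, B 0 w.succ := by
          simp only [hD, Matrix.submatrix_apply, hC, Matrix.of_apply,
            if_neg (Fin.succ_ne_zero v)]
          rw [Finset.sum_sub_distrib, ← Finset.mul_sum]
        have hc : B v.succ 0 / B 0 0 ≤ 0 :=
          div_nonpos_of_nonpos_of_nonneg (hoff v.succ 0 (Fin.succ_ne_zero v)) hpos.le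
        have hS0 : 0 ≤ ∑ w : Fin (m+1), B 0 w := hrow 0
        have hSv : 0 ≤ ∑ w : Fin (m+1), B v.succ w := hrow v.succ
        have hcm : B v.succ 0 / B 0 0 * B 0 0 = B v.succ 0 := div_mul_cancel₀ _ h0
        have e2' : ∑ w : Fin m, B 0 w.succ = (∑ w : Fin (m+1), B 0 w) - B 0 0 := by linarith
        have expand : B v.succ 0 / B 0 0 * ∑ w : Fin m, B 0 w.succ
            = B v.succ 0 / B 0 0 * (∑ w : Fin (m+1), B 0 w) - B v.succ 0 := by
          rw [e2', mul_sub, hcm]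
        rw [hsum]
        have hmul : B v.succ 0 / B 0 0 * (∑ w : Fin (m+1), B 0 w) ≤ 0 :=
          mul_nonpos_of_nonpos_of_nonneg hc hS0
        linarith
      have hDnn := ih D hoffD hrowD
      have hdetB : B.det = B 0 0 * D.det := by
        have h5 := congrArg Matrix.det hEB
        rw [Matrix.det_mul, hdetE, one_mul] at h5
        rw [h5, hdetC]
      rw [hdetB]
      exact mul_nonneg hpos.le hDnn

lemma det_nonneg_dd {m : Type*} [Fintype m] [DecidableEq m] (B : Matrix m m ℝ)
    (hoff : ∀ v w, v ≠ w → B v w ≤ 0) (hrow : ∀ v, 0 ≤ ∑ w, B v w) : 0 ≤ B.det := by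
  let e := (Fintype.equivFin m).symm
  rw [← Matrix.det_submatrix_equiv_self e B]
  apply det_nonneg_aux
  · intro v w hvw
    exact hoff _ _ (fun h => hvw (e.injective h))
  · intro v
    simp only [Matrix.submatrix_apply]
    rw [Equiv.sum_comp e (fun w => B (e v) w)]
    exact hrow _

lemma det_eq_minor_of_row_single {m : Type*} [Fintype m] [DecidableEq m]
    (M : Matrix m m ℝ) (k : m) (h : M k = Pi.single k 1) :
    M.det = (M.submatrix (fun a : {x : m // x ≠ k} => (a : m))
      (fun a : {x : m // x ≠ k} => (a : m))).det := by
  classical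
  let e : {x : m // x = k} ⊕ {x : m // ¬ x = k} ≃ m := Equiv.sumCompl (· = k)
  rw [← Matrix.det_submatrix_equiv_self e M]
  set N := M.submatrix e e with hN
  have hU : Unique {x : m // x = k} := ⟨⟨⟨k, rfl⟩⟩, fun a => Subtype.ext a.2⟩
  have hb12 : N.toBlocks₁₂ = 0 := by
    ext a b
    have ha : (e (Sum.inl a) : m) = k := a.2
    have hb : (e (Sum.inr b) : m) ≠ k := b.2
    simp only [Matrix.toBlocks₁₂, Matrix.of_apply, hN, Matrix.submatrix_apply]
    rw [ha, h]
    exact Pi.single_eq_of_ne hb 1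
  have hblocks : N = Matrix.fromBlocks N.toBlocks₁₁ 0 N.toBlocks₂₁ N.toBlocks₂₂ := by
    rw [← hb12, Matrix.fromBlocks_toBlocks N]
  rw [hblocks, Matrix.det_fromBlocks_zero₁₂]
  haveI := hU
  have hA : N.toBlocks₁₁.det = 1 := by
    rw [Matrix.det_unique]
    simp only [Matrix.toBlocks₁₁, Matrix.of_apply, hN, Matrix.submatrix_apply]
    have hd : e (Sum.inl (default : {x : m // x = k})) = k :=
      (default : {x : m // x = k}).2
    rw [hd, h]
    exact Pi.single_eq_same k 1
  rw [hA, one_mul]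
  rfl

section laps
variable {n : ℕ} (A : Fin n → Fin n → Bool)

lemma filter_erase_self (hA : ∀ i, A i i = false) (u : Fin n) :
    (Finset.univ.erase u).filter (fun w => A u w = true)
      = Finset.univ.filter (fun w => A u w = true) := by
  rw [Finset.filter_erase, Finset.erase_eq_of_notMem]
  simp [hA u]

lemma filter_erase_self' (hA : ∀ i, A i i = false) (u : Fin n) :
    (Finset.univ.erase u).filter (fun w => A w u = true)
      = Finset.univ.filter (fun w => A w u = true) := by
  rw [Finset.filter_erase, Finset.erase_eq_of_notMem]
  simp [hA u]

lemma lap_rowsum_x (hA : ∀ i, A i i = false) (x : Fin n → ℝ) (u : Fin n) :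
    ∑ w, lap A u w * x w
      = (outdeg A u : ℝ) * x u - ∑ w ∈ Finset.univ.filter (fun w => A u w = true), x w := by
  rw [← Finset.add_sum_erase _ _ (Finset.mem_univ u)]
  have h1 : lap A u u = (outdeg A u : ℝ) := by simp [lap]
  have h2 : ∑ w ∈ Finset.univ.erase u, lap A u w * x w
      = ∑ w ∈ Finset.univ.erase u, (if A u w = true then -x w else 0) := by
    apply Finset.sum_congr rfl
    intro w hw
    have hne : u ≠ w := fun h => (Finset.mem_erase.1 hw).1 h.symm
    simp only [lap, Matrix.of_apply, if_neg hne]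
    split <;> ring
  rw [h1, h2]
  have h3 : ∑ w ∈ Finset.univ.erase u, (if A u w = true then -x w else 0)
      = -∑ w ∈ Finset.univ.filter (fun w => A u w = true), x w := by
    rw [← filter_erase_self A hA u, Finset.sum_filter]
    rw [← Finset.sum_neg_distrib]
    apply Finset.sum_congr rfl
    intro w _
    split <;> simp
  rw [h3]
  ring

lemma lap_colsum_x (hA : ∀ i, A i i = false) (x : Fin n → ℝ) (u : Fin n) :
    ∑ w, x w * lap A w u
      = (outdeg A u : ℝ) * x u - ∑ w ∈ Finset.univ.filter (fun w => A w u = true), x w := by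
  rw [← Finset.add_sum_erase _ _ (Finset.mem_univ u)]
  have h1 : lap A u u = (outdeg A u : ℝ) := by simp [lap]
  have h2 : ∑ w ∈ Finset.univ.erase u, x w * lap A w u
      = ∑ w ∈ Finset.univ.erase u, (if A w u = true then -x w else 0) := by
    apply Finset.sum_congr rfl
    intro w hw
    have hne : w ≠ u := (Finset.mem_erase.1 hw).1
    simp only [lap, Matrix.of_apply, if_neg hne]
    split <;> ring
  rw [h1, h2]
  have h3 : ∑ w ∈ Finset.univ.erase u, (if A w u = true then -x w else 0)
      = -∑ w ∈ Finset.univ.filter (fun w => A w u = true), x w := by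
    rw [← filter_erase_self' A hA u, Finset.sum_filter]
    rw [← Finset.sum_neg_distrib]
    apply Finset.sum_congr rfl
    intro w _
    split <;> simp
  rw [h3]
  ring

lemma lap_rowsum (hA : ∀ i, A i i = false) (u : Fin n) : ∑ w, lap A u w = 0 := by
  have := lap_rowsum_x A hA (fun _ => 1) u
  simpa [outdeg] using this

lemma lap_colsum (hA : ∀ i, A i i = false) (hbal : IsBalanced A) (u : Fin n) :
    ∑ w, lap A w u = 0 := by
  have := lap_colsum_x A hA (fun _ => 1) u
  simp only [mul_one, one_mul] at this
  rw [this]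
  simp [indeg, ← hbal u]

end laps

lemma sum_force {α : Type*} {s : Finset α} {f : α → ℝ} {M : ℝ}
    (h : ∀ x ∈ s, f x ≤ M) (heq : ∑ x ∈ s, f x = s.card * M) :
    ∀ x ∈ s, f x = M := by
  intro x hx
  by_contra hne
  have hlt : f x < M := lt_of_le_of_ne (h x hx) hne
  have : ∑ y ∈ s, f y < ∑ y ∈ s, M := Finset.sum_lt_sum h ⟨x, hx, hlt⟩
  rw [Finset.sum_const, nsmul_eq_mul] at this
  linarith



lemma right_kernel_const {n : ℕ} {A : Fin n → Fin n → Bool} (hA : ∀ i, A i i = false)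
    (hsc : StronglyConnected A) (x : Fin n → ℝ)
    (hx : ∀ u, ∑ w, lap A u w * x w = 0) (a b : Fin n) : x a = x b := by
  obtain ⟨v₀, -, hmax⟩ := Finset.exists_max_image Finset.univ x ⟨a, Finset.mem_univ a⟩
  have step : ∀ u, x u = x v₀ → ∀ w, A u w = true → x w = x v₀ := by
    intro u hu w hw
    have h1 := hx u
    rw [lap_rowsum_x A hA x u] at h1
    have h2 : ∑ w ∈ Finset.univ.filter (fun w => A u w = true), x w
        = ((Finset.univ.filter (fun w => A u w = true)).card : ℝ) * x v₀ := by
      rw [show ((Finset.univ.filter (fun w => A u w = true)).card : ℝ) = (outdeg A u : ℝ) from rfl]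
      rw [← hu]; linarith
    exact sum_force (fun y _ => hmax y (Finset.mem_univ y)) h2 w
      (Finset.mem_filter.2 ⟨Finset.mem_univ w, hw⟩)
  have hall : ∀ w, x w = x v₀ := by
    intro w
    have h := hsc v₀ w
    induction h with
    | refl => rfl
    | tail _ hedge ih => exact step _ ih _ hedge
  rw [hall a, hall b]

lemma left_kernel_const {n : ℕ} {A : Fin n → Fin n → Bool} (hA : ∀ i, A i i = false)
    (hsc : StronglyConnected A) (hbal : IsBalanced A) (x : Fin n → ℝ)
    (hx : ∀ u, ∑ w, x w * lap A w u = 0) (a b : Fin n) : x a = x b := by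
  obtain ⟨v₀, -, hmax⟩ := Finset.exists_max_image Finset.univ x ⟨a, Finset.mem_univ a⟩
  have step : ∀ u, x u = x v₀ → ∀ w, A w u = true → x w = x v₀ := by
    intro u hu w hw
    have h1 := hx u
    rw [lap_colsum_x A hA x u] at h1
    have h2 : ∑ w ∈ Finset.univ.filter (fun w => A w u = true), x w
        = ((Finset.univ.filter (fun w => A w u = true)).card : ℝ) * x v₀ := by
      rw [show ((Finset.univ.filter (fun w => A w u = true)).card : ℝ) = ((indeg A u : ℕ) : ℝ)
        from rfl, hbal u, ← hu]
      linarith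
    exact sum_force (fun y _ => hmax y (Finset.mem_univ y)) h2 w
      (Finset.mem_filter.2 ⟨Finset.mem_univ w, hw⟩)
  have hall : ∀ w, x w = x v₀ := by
    intro w
    have h := hsc w v₀
    induction h using Relation.ReflTransGen.head_induction_on with
    | refl => rfl
    | head hedge _ ih => exact step _ ih _ hedge
  rw [hall a, hall b]

lemma lap_det_zero {n : ℕ} (A : Fin n → Fin n → Bool) (hA : ∀ i, A i i = false) (a : Fin n) :
    (lap A).det = 0 := by
  haveI : Nonempty (Fin n) := ⟨a⟩
  rw [← Matrix.exists_mulVec_eq_zero_iff]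
  refine ⟨fun _ => 1, fun h => one_ne_zero (congrFun h a), ?_⟩
  funext u
  simp only [Matrix.mulVec, dotProduct, mul_one, Pi.zero_apply]
  exact lap_rowsum A hA u

lemma adj_const {n : ℕ} (A : Fin n → Fin n → Bool) (hA : ∀ i, A i i = false)
    (hsc : StronglyConnected A) (hbal : IsBalanced A) (k i : Fin n) :
    (lap A).adjugate k k = (lap A).adjugate i i := by
  have hdet := lap_det_zero A hA i
  have hmul : lap A * (lap A).adjugate = 0 := by
    rw [Matrix.mul_adjugate, hdet, zero_smul]
  have hmul' : (lap A).adjugate * lap A = 0 := by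
    rw [Matrix.adjugate_mul, hdet, zero_smul]
  have hcol : (lap A).adjugate k k = (lap A).adjugate i k := by
    refine right_kernel_const hA hsc (fun v => (lap A).adjugate v k) (fun u => ?_) k i
    have := congrFun (congrFun hmul u) k
    rw [Matrix.mul_apply] at this
    simpa using this
  have hrow : (lap A).adjugate i k = (lap A).adjugate i i := by
    refine left_kernel_const hA hsc hbal (fun w => (lap A).adjugate i w) (fun u => ?_) k i
    have := congrFun (congrFun hmul' i) u
    rw [Matrix.mul_apply] at this
    simpa using this
  rw [hcol, hrow]





lemma minor1_eq_adj {n : ℕ} (L : Matrix (Fin n) (Fin n) ℝ) (k : Fin n) :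
    minor1 L k = L.adjugate k k := by
  rw [Matrix.adjugate_apply,
    det_eq_minor_of_row_single (L.updateRow k (Pi.single k 1)) k (Matrix.updateRow_self)]
  unfold minor1
  congr 1
  ext a b
  exact (congrFun (Matrix.updateRow_ne a.2) _).symm

lemma key_ineq {n : ℕ} (A : Fin n → Fin n → Bool) (hA : ∀ i, A i i = false)
    (i j : Fin n) (hij : A j i = true) :
    minor2 (lap A) i j ≤ minor1 (lap A) i := by
  have hji : j ≠ i := fun h => by rw [h, hA i] at hij; exact Bool.false_ne_true hij
  set L := lap A with hL
  set c : {x : Fin n // x ≠ i} → Fin n := fun a => (a : Fin n) with hc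
  set L' : Matrix {x : Fin n // x ≠ i} {x : Fin n // x ≠ i} ℝ := L.submatrix c c with hL'
  set j' : {x : Fin n // x ≠ i} := ⟨j, hji⟩ with hj'
  have hsplit : L'.det = (L'.updateRow j' (L' j' - Pi.single j' 1)).det
      + (L'.updateRow j' (Pi.single j' 1)).det := by
    rw [← Matrix.det_updateRow_add, sub_add_cancel, Matrix.updateRow_eq_self]
  have hterm2 : (L'.updateRow j' (Pi.single j' 1)).det = minor2 L i j := by
    rw [det_eq_minor_of_row_single _ j' (Matrix.updateRow_self)]
    have heq : ((L'.updateRow j' (Pi.single j' 1)).submatrix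
        (fun a : {x : {x : Fin n // x ≠ i} // x ≠ j'} => (a : {x : Fin n // x ≠ i}))
        (fun a : {x : {x : Fin n // x ≠ i} // x ≠ j'} => (a : {x : Fin n // x ≠ i})))
        = (L'.submatrix
        (fun a : {x : {x : Fin n // x ≠ i} // x ≠ j'} => (a : {x : Fin n // x ≠ i}))
        (fun a : {x : {x : Fin n // x ≠ i} // x ≠ j'} => (a : {x : Fin n // x ≠ i}))) := by
      ext a b
      exact congrFun (Matrix.updateRow_ne a.2) _
    rw [heq]
    unfold minor2
    let φ : {x : {x : Fin n // x ≠ i} // x ≠ j'} ≃ {x : Fin n // x ≠ i ∧ x ≠ j} :=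
      { toFun := fun a => ⟨((a : {x : Fin n // x ≠ i}) : Fin n), (a : {x : Fin n // x ≠ i}).2,
          fun h => a.2 (Subtype.ext h)⟩
        invFun := fun b => ⟨⟨(b : Fin n), b.2.1⟩,
          fun h => b.2.2 (congrArg Subtype.val h)⟩
        left_inv := fun a => by ext; rfl
        right_inv := fun b => by ext; rfl }
    have : (L.submatrix (fun a : {x : Fin n // x ≠ i ∧ x ≠ j} => (a : Fin n))
        (fun a : {x : Fin n // x ≠ i ∧ x ≠ j} => (a : Fin n)))
        = ((L'.submatrix
        (fun a : {x : {x : Fin n // x ≠ i} // x ≠ j'} => (a : {x : Fin n // x ≠ i}))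
        (fun a : {x : {x : Fin n // x ≠ i} // x ≠ j'} => (a : {x : Fin n // x ≠ i}))).submatrix
          φ.symm φ.symm) := by
      ext a b; rfl
    rw [this, Matrix.det_submatrix_equiv_self]
  have hterm1 : 0 ≤ (L'.updateRow j' (L' j' - Pi.single j' 1)).det := by
    apply det_nonneg_dd
    · intro v w hvw
      have hvw' : (v : Fin n) ≠ (w : Fin n) := fun h => hvw (Subtype.ext h)
      have hLle : L (v : Fin n) (w : Fin n) ≤ 0 := by
        simp only [hL, lap, Matrix.of_apply, if_neg hvw']
        split <;> norm_num
      rcases eq_or_ne v j' with hv | hv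
      · rw [hv, Matrix.updateRow_self]
        have hw : w ≠ j' := fun h => hvw (hv.trans h.symm)
        have : (Pi.single j' (1:ℝ) : {x : Fin n // x ≠ i} → ℝ) w = 0 := by simp [hw]
        simp only [Pi.sub_apply, this, sub_zero]
        rw [← hv]
        exact hLle
      · rw [Matrix.updateRow_ne hv]
        exact hLle
    · intro v
      have hsub : ∀ (u : Fin n), ∑ w : {x : Fin n // x ≠ i}, L u (w : Fin n)
          = ∑ w ∈ Finset.univ.erase i, L u w := fun u =>
        (Finset.sum_subtype (Finset.univ.erase i) (fun x => by simp) (fun w => L u w)).symm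
      have hrow' : ∀ u : Fin n, ∑ w ∈ Finset.univ.erase i, L u w = - L u i := by
        intro u
        have h1 : ∑ w, L u w = L u i + ∑ w ∈ Finset.univ.erase i, L u w :=
          (Finset.add_sum_erase _ _ (Finset.mem_univ i)).symm
        have h2 : ∑ w, L u w = 0 := lap_rowsum A hA u
        linarith
      rcases eq_or_ne v j' with hv | hv
      · rw [hv]
        have e1 : ∑ w : {x : Fin n // x ≠ i},
            (L'.updateRow j' (L' j' - Pi.single j' 1)) j' w
            = (∑ w : {x : Fin n // x ≠ i}, L' j' w)
              - ∑ w : {x : Fin n // x ≠ i}, Pi.single j' (1:ℝ) w := by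
          rw [Matrix.updateRow_self, ← Finset.sum_sub_distrib]
          rfl
        have e2 : ∑ w : {x : Fin n // x ≠ i}, Pi.single j' (1:ℝ) w = 1 := by
          rw [Finset.sum_pi_single' j' (1:ℝ) Finset.univ]
          simp
        have e3 : ∑ w : {x : Fin n // x ≠ i}, L' j' w = - L j i := by
          rw [show (∑ w : {x : Fin n // x ≠ i}, L' j' w)
            = ∑ w : {x : Fin n // x ≠ i}, L j (w : Fin n) from rfl, hsub j, hrow' j]
        have e4 : L j i = -1 := by
          simp only [hL, lap, Matrix.of_apply, if_neg hji, if_pos hij]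
        rw [e1, e2, e3, e4]
        norm_num
      · have e1 : ∑ w : {x : Fin n // x ≠ i},
            (L'.updateRow j' (L' j' - Pi.single j' 1)) v w
            = ∑ w : {x : Fin n // x ≠ i}, L (v : Fin n) (w : Fin n) := by
          rw [Matrix.updateRow_ne hv]
          rfl
        have e4 : L (v : Fin n) i ≤ 0 := by
          simp only [hL, lap, Matrix.of_apply, if_neg v.2]
          split <;> norm_num
        rw [e1, hsub (v : Fin n), hrow' (v : Fin n)]
        linarith
  have hm1 : minor1 L i = L'.det := rfl
  rw [hm1, hsplit]
  linarith [hterm1, le_of_eq hterm2]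


lemma minor1_transpose {n : ℕ} (L : Matrix (Fin n) (Fin n) ℝ) (k : Fin n) :
    minor1 Lᵀ k = minor1 L k := by
  unfold minor1
  rw [← Matrix.det_transpose (L.submatrix (fun a : {x : Fin n // x ≠ k} => (a : Fin n))
    (fun a : {x : Fin n // x ≠ k} => (a : Fin n)))]
  congr 1

lemma minor2_transpose {n : ℕ} (L : Matrix (Fin n) (Fin n) ℝ) (i j : Fin n) :
    minor2 Lᵀ i j = minor2 L i j := by
  unfold minor2
  rw [← Matrix.det_transpose (L.submatrix (fun a : {x : Fin n // x ≠ i ∧ x ≠ j} => (a : Fin n))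
    (fun a : {x : Fin n // x ≠ i ∧ x ≠ j} => (a : Fin n)))]
  congr 1

/-- if `(i,j)` or `(j,i)` is an edge of a strongly connected balanced
digraph then `det L[{i,j}ᶜ,{i,j}ᶜ] ≤ κ(G)` (the common cofactor). -/
theorem stmt_5 {n : ℕ} (A : Fin n → Fin n → Bool) (hA : ∀ i, A i i = false)
    (hsc : StronglyConnected A) (hbal : IsBalanced A)
    (i j : Fin n) (hedge : A i j = true ∨ A j i = true) :
    ∀ k : Fin n, minor2 (lap A) i j ≤ minor1 (lap A) k := by
  intro k
  have hcof : ∀ a b : Fin n, minor1 (lap A) a = minor1 (lap A) b := by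
    intro a b
    rw [minor1_eq_adj, minor1_eq_adj]
    exact adj_const A hA hsc hbal a b
  rcases hedge with hij | hji
  · set A' : Fin n → Fin n → Bool := fun v w => A w v with hA'def
    have hA' : ∀ v, A' v v = false := fun v => hA v
    have hkey := key_ineq A' hA' i j (show A' j i = true from hij)
    have hlap' : lap A' = (lap A)ᵀ := by
      ext v w
      simp only [lap, Matrix.of_apply, Matrix.transpose_apply]
      rcases eq_or_ne v w with rfl | hvw
      · have h1 : outdeg A' v = outdeg A v := by
          have h2 : outdeg A' v = indeg A v := by simp only [indeg, outdeg, hA'def]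
          rw [h2, hbal v]
        rw [if_pos rfl, if_pos rfl, h1]
      · rw [if_neg hvw, if_neg (Ne.symm hvw)]
    rw [hlap', minor2_transpose, minor1_transpose] at hkey
    exact le_of_le_of_eq hkey (hcof i k)
  · have hkey := key_ineq A hA i j hji
    exact le_of_le_of_eq hkey (hcof i k)
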